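/- Suppose the test feature covariance is Σ = σ_x² I_d for some σ_x > 0, and let S₁ ⊆ S₂ ⊆ {1,…,d} with |S₁| ≥ n and X_{S₁} of full row rank. Then tr((X_{S₂} X_{S₂}ᵀ)^{-1}) ≤ tr((X_{S₁} X_{S₁}ᵀ)^{-1}), and consequently df_R(S₂) ≤ df_R(S₁). Moreover, if there exists j ∈ S₂∖S₁ such that (X_{S₁} X_{S₁}ᵀ)^{-1} x_{(j)} ≠ 0, then the inequality is strict. (Here X_{S₂} X_{S₂}ᵀ = X_{S₁} X_{S₁}ᵀ + Σ_{j ∈ S₂∖S₁} x_{(j)} x_{(j)}ᵀ.) -/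

import Mathlib

open Matrix

variable {n d : ℕ}

lemma auxDiagNonneg {m : Type*} [Fintype m] [DecidableEq m] {M : Matrix m m ℝ}
    (h : M.PosSemidef) (i : m) : 0 ≤ M i i := by
  have := h.dotProduct_mulVec_nonneg (Pi.single i 1)
  simpa [dotProduct, mulVec, Pi.single_apply, mul_comm] using this

lemma auxTraceNonneg {m : Type*} [Fintype m] [DecidableEq m] {M : Matrix m m ℝ}
    (h : M.PosSemidef) : 0 ≤ M.trace := by
  rw [Matrix.trace]
  exact Finset.sum_nonneg fun i _ => auxDiagNonneg h i

lemma auxZero {m : Type*} [Fintype m] [DecidableEq m] {M : Matrix m m ℝ}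
    (h : M.PosSemidef) (ht : M.trace ≤ 0) : M = 0 := by
  have hsum : ∑ i, M i i = 0 :=
    le_antisymm (by simpa [Matrix.trace, Matrix.diag] using ht)
      (Finset.sum_nonneg fun i _ => auxDiagNonneg h i)
  have hdiag : ∀ i, M i i = 0 := fun i =>
    (Finset.sum_eq_zero_iff_of_nonneg (fun i _ => auxDiagNonneg h i)).mp hsum i (Finset.mem_univ i)
  have hcol : ∀ i, M *ᵥ Pi.single i 1 = 0 := fun i =>
    (h.dotProduct_mulVec_zero_iff _).mp
      (by simpa [dotProduct, mulVec, Pi.single_apply, mul_comm] using hdiag i)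
  ext k i
  have := congrFun (hcol i) k
  simpa [mulVec, Pi.single_apply] using this


/-- The submatrix of `X` consisting of the columns indexed by `S`. -/
noncomputable def colSub (X : Matrix (Fin n) (Fin d) ℝ) (S : Finset (Fin d)) :
    Matrix (Fin n) {j // j ∈ S} ℝ :=
  Matrix.of fun i j => X i j.val


lemma auxGramPSD {S : Finset (Fin d)} (X : Matrix (Fin n) (Fin d) ℝ) :
    (colSub X S * (colSub X S)ᵀ).PosSemidef := by
  rw [← Matrix.conjTranspose_eq_transpose_of_trivial]
  exact posSemidef_self_mul_conjTranspose _

/-- The predictive model degrees of freedom of the minimum-ℓ₂-norm least squares model on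
the variable subset `S` with isotropic test covariance `σ_x² I`:
`df_R(S) = n/2 + (n/2)·σ_x²·tr((X_S X_Sᵀ)⁻¹)`. -/
noncomputable def dfROver (X : Matrix (Fin n) (Fin d) ℝ) (σx : ℝ) (S : Finset (Fin d)) : ℝ :=
  (n : ℝ) / 2 +
    ((n : ℝ) / 2) * σx ^ 2 * ((colSub X S * (colSub X S)ᵀ)⁻¹).trace

/-- With isotropic test covariance `σ_x² I`, for nested subsets
`S₁ ⊆ S₂` in the overparameterized regime (`|S₁| ≥ n`, `X_{S₁}` of full row rank),
`tr((X_{S₂}X_{S₂}ᵀ)⁻¹) ≤ tr((X_{S₁}X_{S₁}ᵀ)⁻¹)` and hence `df_R(S₂) ≤ df_R(S₁)`;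
strictly so if some new column `x_{(j)}` is not annihilated by `(X_{S₁}X_{S₁}ᵀ)⁻¹`. -/
theorem dfR_antitone_overparameterized
    (X : Matrix (Fin n) (Fin d) ℝ) (σx : ℝ) (hσx : 0 < σx)
    (S₁ S₂ : Finset (Fin d)) (hsub : S₁ ⊆ S₂) (hcard : n ≤ S₁.card)
    (hrank : (colSub X S₁).rank = n) :
    ((colSub X S₂ * (colSub X S₂)ᵀ)⁻¹).trace ≤
        ((colSub X S₁ * (colSub X S₁)ᵀ)⁻¹).trace ∧
      dfROver X σx S₂ ≤ dfROver X σx S₁ ∧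
      ((∃ j ∈ S₂ \ S₁, (colSub X S₁ * (colSub X S₁)ᵀ)⁻¹ *ᵥ (fun i => X i j) ≠ 0) →
        ((colSub X S₂ * (colSub X S₂)ᵀ)⁻¹).trace <
            ((colSub X S₁ * (colSub X S₁)ᵀ)⁻¹).trace ∧
          dfROver X σx S₂ < dfROver X σx S₁) := by
  set A := colSub X S₁ * (colSub X S₁)ᵀ with hAdef
  set B := colSub X S₂ * (colSub X S₂)ᵀ with hBdef
  set C := colSub X (S₂ \ S₁) * (colSub X (S₂ \ S₁))ᵀ with hCdef
  -- decomposition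
  have hBeq : B = A + C := by
    ext i k
    simp only [hAdef, hBdef, hCdef, Matrix.mul_apply, Matrix.add_apply, colSub,
      Matrix.transpose_apply, Matrix.of_apply]
    rw [Finset.sum_coe_sort S₂ (fun j => X i j * X k j),
      Finset.sum_coe_sort S₁ (fun j => X i j * X k j),
      Finset.sum_coe_sort (S₂ \ S₁) (fun j => X i j * X k j),
      ← Finset.sum_sdiff hsub]
    ring
  have hApsd : A.PosSemidef := auxGramPSD X
  have hCpsd : C.PosSemidef := auxGramPSD X
  -- A is positive definite
  have hApd : A.PosDef := by
    have hr : A.rank = n := by rw [hAdef, Matrix.rank_self_mul_transpose, hrank]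
    have hsurj : Function.Surjective A.mulVecLin := by
      rw [← LinearMap.range_eq_top]
      apply Submodule.eq_top_of_finrank_eq
      rw [Module.finrank_fin_fun]
      exact hr
    have hinj : Function.Injective A.mulVecLin :=
      (LinearMap.injective_iff_surjective).mpr hsurj
    refine Matrix.posDef_iff_dotProduct_mulVec.mpr ⟨hApsd.1, fun x hx => ?_⟩
    rcases lt_or_eq_of_le (hApsd.dotProduct_mulVec_nonneg x) with h | h
    · exact h
    · exact absurd (hinj (show A.mulVecLin x = A.mulVecLin 0 by
        simpa [Matrix.mulVecLin_apply] using (hApsd.dotProduct_mulVec_zero_iff x).mp h.symm)) hx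
  have hBpd : B.PosDef := hBeq ▸ hApd.add_posSemidef hCpsd
  have hAl : A⁻¹ * A = 1 := Matrix.nonsing_inv_mul A hApd.det_pos.ne'.isUnit
  have hAr : A * A⁻¹ = 1 := Matrix.mul_nonsing_inv A hApd.det_pos.ne'.isUnit
  have hBl : B⁻¹ * B = 1 := Matrix.nonsing_inv_mul B hBpd.det_pos.ne'.isUnit
  have hBr : B * B⁻¹ = 1 := Matrix.mul_nonsing_inv B hBpd.det_pos.ne'.isUnit
  -- key identity
  have step2 : A⁻¹ - B⁻¹ = A⁻¹ * C * B⁻¹ := by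
    have hC' : C = B - A := by rw [hBeq]; abel
    rw [hC', Matrix.mul_sub, Matrix.sub_mul, Matrix.mul_assoc A⁻¹ B B⁻¹, hBr, hAl,
      Matrix.mul_one, Matrix.one_mul]
  have step1 : A⁻¹ = B⁻¹ + B⁻¹ * (C * A⁻¹) := by
    have h1 : B * A⁻¹ = 1 + C * A⁻¹ := by rw [hBeq, Matrix.add_mul, hAr]
    calc A⁻¹ = B⁻¹ * B * A⁻¹ := by rw [hBl, Matrix.one_mul]
      _ = B⁻¹ * (B * A⁻¹) := by rw [Matrix.mul_assoc]
      _ = B⁻¹ * (1 + C * A⁻¹) := by rw [h1]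
      _ = B⁻¹ + B⁻¹ * (C * A⁻¹) := by rw [Matrix.mul_add, Matrix.mul_one]
  have key : A⁻¹ - B⁻¹ = B⁻¹ * (C + C * A⁻¹ * C) * B⁻¹ := by
    rw [step2]
    conv_lhs => rw [step1]
    noncomm_ring
  -- PSD of the difference
  have hPpsd : (C + C * A⁻¹ * C).PosSemidef := by
    refine hCpsd.add ?_
    have := hApd.posSemidef.inv.mul_mul_conjTranspose_same C
    rwa [hCpsd.1] at this
  have hDpsd : (A⁻¹ - B⁻¹).PosSemidef := by
    rw [key]
    have := hPpsd.conjTranspose_mul_mul_same B⁻¹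
    rwa [hBpd.posSemidef.inv.1] at this
  have ht : 0 ≤ (A⁻¹ - B⁻¹).trace := auxTraceNonneg hDpsd
  rw [Matrix.trace_sub] at ht
  have htle : B⁻¹.trace ≤ A⁻¹.trace := by linarith
  have hc : (0:ℝ) ≤ (n : ℝ) / 2 * σx ^ 2 := by positivity
  refine ⟨htle, ?_, ?_⟩
  · unfold dfROver
    have := mul_le_mul_of_nonneg_left htle hc
    linarith
  · rintro ⟨j, hj, hjv⟩
    have htlt : B⁻¹.trace < A⁻¹.trace := by
      rcases lt_or_eq_of_le htle with h | h
      · exact h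
      · exfalso
        -- trace difference zero → D = 0 → C + CA⁻¹C = 0 → C = 0 → column j zero
        have hD0 : A⁻¹ - B⁻¹ = 0 := auxZero hDpsd (by rw [Matrix.trace_sub, h]; simp)
        have hP0 : C + C * A⁻¹ * C = 0 := by
          have h0 : B⁻¹ * (C + C * A⁻¹ * C) * B⁻¹ = 0 := by rw [← key, hD0]
          calc C + C * A⁻¹ * C
              = B * (B⁻¹ * (C + C * A⁻¹ * C) * B⁻¹) * B := by
                rw [Matrix.mul_assoc B _ B, Matrix.mul_assoc _ _ B, hBl, Matrix.mul_one,
                  ← Matrix.mul_assoc, ← Matrix.mul_assoc, hBr, Matrix.one_mul]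
            _ = 0 := by rw [h0]; simp
        have hCAC : (C * A⁻¹ * C).PosSemidef := by
          have := hApd.posSemidef.inv.mul_mul_conjTranspose_same C
          rwa [hCpsd.1] at this
        have hCtr : C.trace ≤ 0 := by
          have := congrArg Matrix.trace hP0
          rw [Matrix.trace_add, Matrix.trace_zero] at this
          have h2 := auxTraceNonneg hCAC
          linarith
        have hC0 : C = 0 := auxZero hCpsd hCtr
        have hv0 : (fun i => X i j) = (0 : Fin n → ℝ) := by
          funext i
          simp only [Pi.zero_apply]
          have hdi : C i i = 0 := by rw [hC0]; simp
          have hsq : ∑ k : {x // x ∈ S₂ \ S₁}, X i k.val * X i k.val = 0 := by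
            simpa [hCdef, Matrix.mul_apply, colSub, Matrix.transpose_apply] using hdi
          have := (Finset.sum_eq_zero_iff_of_nonneg
            (fun k _ => mul_self_nonneg (X i k.val))).mp hsq ⟨j, hj⟩ (Finset.mem_univ _)
          nlinarith [this]
        exact hjv (by rw [hv0, Matrix.mulVec_zero])
    have hn : 0 < n := by
      rcases Nat.eq_zero_or_pos n with h | h
      · exfalso
        subst h
        have hz : ∀ M : Matrix (Fin 0) (Fin 0) ℝ, M.trace = 0 := fun M => by
          simp [Matrix.trace]
        rw [hz, hz] at htlt
        exact lt_irrefl _ htlt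
      · exact h
    refine ⟨htlt, ?_⟩
    unfold dfROver
    have hcpos : (0:ℝ) < (n : ℝ) / 2 * σx ^ 2 := by positivity
    have := mul_lt_mul_of_pos_left htlt hcpos
    linarith
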